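/- Let a and n be positive integers with a < n, a even, n odd, and gcd(a, n) = 1. Then the circulant graph C(2n; {a, n}) is isomorphic to the prism graph Pr_n, i.e., to the Cartesian product of the path on two vertices P_2 with the cycle C_n. -/

import Mathlib

/-- The circulant graph `C(n; S)`: vertex set `ZMod n`, with distinct `i`, `j` adjacent iff
`(i - j) mod n` or `(j - i) mod n` lies in `S`. -/
def circGraph (n : ℕ) (S : Set ℕ) : SimpleGraph (ZMod n) :=
  SimpleGraph.fromRel (fun i j => ∃ a ∈ S, i - j = (a : ZMod n))

lemma circ_adj (m : ℕ) (S : Set ℕ) (x y : ZMod m) :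
    (circGraph m S).Adj x y ↔
      x ≠ y ∧ ((∃ s ∈ S, x - y = (s : ZMod m)) ∨ (∃ s ∈ S, y - x = (s : ZMod m))) :=
  SimpleGraph.fromRel_adj _ _ _

lemma path2_adj : ∀ p q : ZMod 2, (SimpleGraph.pathGraph 2).Adj p q ↔ p ≠ q := by
  show ∀ p q : Fin 2, (SimpleGraph.pathGraph 2).Adj p q ↔ p ≠ q
  simp only [SimpleGraph.pathGraph_adj]; decide

lemma zmod2_ne : ∀ p q : ZMod 2, p ≠ q ↔ p - q = 1 := by decide

/-- For `a` even, `n` odd and `gcd(a, n) = 1`, the circulant graph `C(2n; {a, n})` is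
isomorphic to the prism graph `P₂ □ Cₙ`. -/
theorem circulant_iso_prism (n a : ℕ) (ha0 : 0 < a) (ha : a < n)
    (haeven : Even a) (hnodd : Odd n) (hg : Nat.gcd a n = 1) :
    Nonempty
      (circGraph (2 * n) {a, n} ≃g
        (SimpleGraph.pathGraph 2).boxProd (circGraph n {1})) := by
  have hn1 : 1 < n := by omega
  haveI hNn : NeZero n := ⟨by omega⟩
  have hcop2 : Nat.Coprime 2 n :=
    Nat.prime_two.coprime_iff_not_dvd.2 (by rw [Nat.odd_iff] at hnodd; omega)
  set c : ZMod (2 * n) ≃+* ZMod 2 × ZMod n := ZMod.chineseRemainder hcop2 with hcdef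
  set u : (ZMod n)ˣ := ZMod.unitOfCoprime a hg with hudef
  have hua : (u : ZMod n) = (a : ZMod n) := ZMod.coe_unitOfCoprime a hg
  -- cast facts
  have ha2 : ((a : ℕ) : ZMod 2) = 0 := by
    rw [ZMod.natCast_eq_zero_iff]; exact haeven.two_dvd
  have hn2 : ((n : ℕ) : ZMod 2) = 1 := by
    rw [← ZMod.natCast_mod, Nat.odd_iff.1 hnodd, Nat.cast_one]
  have han : (a : ZMod n) ≠ 0 := by
    rw [Ne, ZMod.natCast_eq_zero_iff]
    exact fun h => absurd (Nat.le_of_dvd ha0 h) (by omega)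
  have hca : c ((a : ℕ) : ZMod (2 * n)) = ((0 : ZMod 2), (a : ZMod n)) := by
    rw [map_natCast]
    exact Prod.ext (by simpa using ha2) (by simp)
  have hcn : c ((n : ℕ) : ZMod (2 * n)) = ((1 : ZMod 2), (0 : ZMod n)) := by
    rw [map_natCast]
    exact Prod.ext (by simpa using hn2) (by simp)
  -- the equivalence
  let E : ZMod (2 * n) ≃ Fin 2 × ZMod n :=
    c.toEquiv.trans (Equiv.prodCongr (Equiv.refl (ZMod 2)) (Units.mulLeft u⁻¹))
  refine ⟨⟨E, ?_⟩⟩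
  intro x y
  have hEx : E x = ((c x).1, ((u⁻¹ : (ZMod n)ˣ) : ZMod n) * (c x).2) := rfl
  have hEy : E y = ((c y).1, ((u⁻¹ : (ZMod n)ˣ) : ZMod n) * (c y).2) := rfl
  -- atoms
  set P := c x with hP
  set Q := c y with hQ
  have key : ∀ w : ZMod n, ((u⁻¹ : (ZMod n)ˣ) : ZMod n) * w = 1 ↔ w = (a : ZMod n) := by
    intro w
    rw [← hua, ← Units.mul_right_inj u, mul_one, ← mul_assoc, Units.mul_inv, one_mul]
  have hxy : (x = y) ↔ (P.1 = Q.1 ∧ P.2 = Q.2) := by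
    rw [← c.injective.eq_iff, Prod.ext_iff]
  have hda : x - y = ((a : ℕ) : ZMod (2 * n)) ↔ (P.1 = Q.1 ∧ P.2 - Q.2 = (a : ZMod n)) := by
    rw [← c.injective.eq_iff, map_sub, hca, Prod.ext_iff]
    simp [Prod.fst_sub, Prod.snd_sub, sub_eq_zero]
    exact Iff.rfl
  have hda' : y - x = ((a : ℕ) : ZMod (2 * n)) ↔ (Q.1 = P.1 ∧ Q.2 - P.2 = (a : ZMod n)) := by
    rw [← c.injective.eq_iff, map_sub, hca, Prod.ext_iff]
    simp [Prod.fst_sub, Prod.snd_sub, sub_eq_zero]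
    exact Iff.rfl
  have hdn : x - y = ((n : ℕ) : ZMod (2 * n)) ↔ (P.1 ≠ Q.1 ∧ P.2 = Q.2) := by
    rw [← c.injective.eq_iff, map_sub, hcn, Prod.ext_iff]
    simp [Prod.fst_sub, Prod.snd_sub, sub_eq_zero, zmod2_ne]
    exact Iff.rfl
  have hdn' : y - x = ((n : ℕ) : ZMod (2 * n)) ↔ (Q.1 ≠ P.1 ∧ Q.2 = P.2) := by
    rw [← c.injective.eq_iff, map_sub, hcn, Prod.ext_iff]
    simp [Prod.fst_sub, Prod.snd_sub, sub_eq_zero, zmod2_ne]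
    exact Iff.rfl
  -- rewrite both adjacencies
  rw [SimpleGraph.boxProd_adj, hEx, hEy, circ_adj]
  simp only [path2_adj, circ_adj, Set.mem_insert_iff, Set.mem_singleton_iff,
    exists_eq_or_imp, exists_eq_left, Nat.cast_one, ne_eq]
  have hmul : ((↑u⁻¹ : ZMod n) * P.2 = ↑u⁻¹ * Q.2) ↔ P.2 = Q.2 := Units.mul_right_inj u⁻¹
  have hsub1 : (↑u⁻¹ : ZMod n) * P.2 - ↑u⁻¹ * Q.2 = 1 ↔ P.2 - Q.2 = (a : ZMod n) := by
    rw [← mul_sub]; exact key _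
  have hsub2 : (↑u⁻¹ : ZMod n) * Q.2 - ↑u⁻¹ * P.2 = 1 ↔ Q.2 - P.2 = (a : ZMod n) := by
    rw [← mul_sub]; exact key _
  rw [hmul, hsub1, hsub2, hxy, hda, hda', hdn, hdn']
  have hCB : P.2 - Q.2 = (a : ZMod n) → ¬ P.2 = Q.2 := fun h hb => by
    rw [hb, sub_self] at h; exact han h.symm
  have hC'B : Q.2 - P.2 = (a : ZMod n) → ¬ P.2 = Q.2 := fun h hb => by
    rw [hb, sub_self] at h; exact han h.symm
  have hsym : (Q.1 = P.1) ↔ (P.1 = Q.1) := eq_comm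
  have hsym2 : (Q.2 = P.2) ↔ (P.2 = Q.2) := eq_comm
  by_cases hA : P.1 = Q.1 <;> by_cases hB : P.2 = Q.2 <;>
    simp [hA, hB, hsym, hsym2] <;> intro _ <;> trivial
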